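/- arXiv:2312.09586 — 3 statements merged into one kernel-verified Lean document; each statement's English description precedes it below -/
import Mathlib

section
/- Let (Y, μ) be a measure space, Θ ⊆ ℝ^d open, and p : Θ × Y → (0, ∞) three times differentiable in θ for μ-almost every y. Fix θ ∈ Θ and indices b, c, d, and suppose: (i) ∫ ∂_b ∂_c ∂_d p(y;θ) dμ(y) = 0; (ii) g_{cd}(θ') = ∫ (∂_c p)(∂_d p)/p dμ is differentiable at θ with ∂_b g_{cd}(θ) = ∫ ∂_b[(∂_c p)(∂_d p)/p] dμ; and (iii) the integrands defining all m-connection coefficients Γ^{(m)} with indices among {b,c,d}, the skewness tensor T_{bcd}, the e-connection coefficient Γ^{(e)}_{cdb}, and y ↦ p(y;θ) ∂_b ∂_c ∂_d log p(y;θ) are μ-integrable. Then the Bartlett identity holds: ∫ p(y;θ) ∂_b ∂_c ∂_d log p(y;θ) dμ(y) = − ∂_b g_{cd}(θ) − Γ^{(e)}_{cdb}(θ). -/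
open MeasureTheory

/-- Partial derivative of `f : ℝ^n → ℝ` along the `a`-th coordinate. -/
noncomputable def pder {n : ℕ} (a : Fin n) (f : (Fin n → ℝ) → ℝ) (θ : Fin n → ℝ) : ℝ :=
  fderiv ℝ f θ (Pi.single a 1)

/-- Fisher information matrix component `g_{cd}(θ) = ∫ (∂_c p)(∂_d p)/p dμ`. -/
noncomputable def fisherComp {n : ℕ} {Y : Type*} [MeasurableSpace Y] (μ : Measure Y)
    (p : (Fin n → ℝ) → Y → ℝ) (c d : Fin n) (θ : Fin n → ℝ) : ℝ :=
  ∫ y, pder c (fun θ' => p θ' y) θ * pder d (fun θ' => p θ' y) θ / p θ y ∂μ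

/-- Integrand of the m-connection coefficient `Γ^{(m)}_{abc}`. -/
noncomputable def mConnIntegrand {n : ℕ} {Y : Type*}
    (p : (Fin n → ℝ) → Y → ℝ) (a b c : Fin n) (θ : Fin n → ℝ) (y : Y) : ℝ :=
  pder a (fun θ' => pder b (fun θ'' => p θ'' y) θ') θ *
    pder c (fun θ' => p θ' y) θ / p θ y

/-- The e-connection coefficient `Γ^{(e)}_{abc}(θ) = ∫ p (∂_a∂_b log p)(∂_c log p) dμ`. -/
noncomputable def eConn {n : ℕ} {Y : Type*} [MeasurableSpace Y] (μ : Measure Y)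
    (p : (Fin n → ℝ) → Y → ℝ) (a b c : Fin n) (θ : Fin n → ℝ) : ℝ :=
  ∫ y, p θ y * pder a (fun θ' => pder b (fun θ'' => Real.log (p θ'' y)) θ') θ *
    pder c (fun θ' => Real.log (p θ' y)) θ ∂μ

open Filter

section Helpers
variable {n : ℕ} {f g : (Fin n → ℝ) → ℝ} {x : Fin n → ℝ} {a : Fin n}

lemma pder_congr_nhds (hfg : f =ᶠ[nhds x] g) : pder a f x = pder a g x := by
  unfold pder; rw [hfg.fderiv_eq]

lemma pder_mul (hf : DifferentiableAt ℝ f x) (hg : DifferentiableAt ℝ g x) :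
    pder a (fun y => f y * g y) x = f x * pder a g x + g x * pder a f x := by
  unfold pder; rw [fderiv_fun_mul hf hg]; simp

lemma pder_sub (hf : DifferentiableAt ℝ f x) (hg : DifferentiableAt ℝ g x) :
    pder a (fun y => f y - g y) x = pder a f x - pder a g x := by
  unfold pder; rw [fderiv_fun_sub hf hg]; simp

lemma pder_inv (hf : DifferentiableAt ℝ f x) (hx : f x ≠ 0) :
    pder a (fun y => (f y)⁻¹) x = -pder a f x / (f x) ^ 2 := by
  have H : HasFDerivAt (fun y => (f y)⁻¹) ((-((f x) ^ 2)⁻¹) • fderiv ℝ f x) x :=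
    (hasDerivAt_inv hx).comp_hasFDerivAt x hf.hasFDerivAt
  unfold pder; rw [H.fderiv]
  simp [smul_eq_mul]; field_simp

lemma pder_div (hf : DifferentiableAt ℝ f x) (hg : DifferentiableAt ℝ g x) (hx : g x ≠ 0) :
    pder a (fun y => f y / g y) x = (pder a f x * g x - f x * pder a g x) / (g x) ^ 2 := by
  have h1 : (fun y => f y / g y) = fun y => f y * (g y)⁻¹ := by
    funext y; rw [div_eq_mul_inv]
  rw [h1, pder_mul hf (hg.fun_inv hx), pder_inv hg hx]
  field_simp; ring

lemma pder_log (hf : DifferentiableAt ℝ f x) (hx : f x ≠ 0) :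
    pder a (fun y => Real.log (f y)) x = pder a f x / f x := by
  unfold pder; rw [(hf.hasFDerivAt.log hx).fderiv]
  simp [smul_eq_mul, div_eq_inv_mul]

lemma contDiffOn_pder_succ {U : Set (Fin n → ℝ)} {m : ℕ} (hU : IsOpen U)
    (hf : ContDiffOn ℝ (m + 1) f U) : ContDiffOn ℝ m (fun x => pder a f x) U := by
  have h := hf.fderiv_of_isOpen hU (le_refl ((m : WithTop ℕ∞) + 1))
  exact h.clm_apply contDiffOn_const

lemma contDiffOn_pder3 {U : Set (Fin n → ℝ)} (hU : IsOpen U)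
    (hf : ContDiffOn ℝ 3 f U) : ContDiffOn ℝ 2 (fun x => pder a f x) U := by
  have h : ContDiffOn ℝ ((2 : ℕ) + 1) f U := by exact_mod_cast hf
  exact_mod_cast contDiffOn_pder_succ hU h

lemma contDiffOn_pder2 {U : Set (Fin n → ℝ)} (hU : IsOpen U)
    (hf : ContDiffOn ℝ 2 f U) : ContDiffOn ℝ 1 (fun x => pder a f x) U := by
  have h : ContDiffOn ℝ ((1 : ℕ) + 1) f U := by exact_mod_cast hf
  exact_mod_cast contDiffOn_pder_succ hU h

lemma contDiffOn_diffAt {U : Set (Fin n → ℝ)} (hU : IsOpen U)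
    (hf : ContDiffOn ℝ 1 f U) {x : Fin n → ℝ} (hx : x ∈ U) : DifferentiableAt ℝ f x :=
  (hf.differentiableOn one_ne_zero).differentiableAt (hU.mem_nhds hx)

lemma bartlett_key {U : Set (Fin n → ℝ)} (hU : IsOpen U)
    {θ : Fin n → ℝ} (hθ : θ ∈ U) (hf : ContDiffOn ℝ 3 f U)
    (hpos : ∀ x ∈ U, 0 < f x) (b c d : Fin n) :
    (f θ * pder b (fun x => pder c (fun x' => pder d (fun x'' => Real.log (f x'')) x') x) θ =
      pder b (fun x => pder c (fun x' => pder d f x') x) θ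
      - pder b (fun x => pder c f x) θ * pder d f θ / f θ
      - pder b (fun x => pder d f x) θ * pder c f θ / f θ
      - pder c (fun x => pder d f x) θ * pder b f θ / f θ
      + 2 * (pder b f θ * pder c f θ * pder d f θ / f θ ^ 2))
  ∧ (pder b (fun x => pder c f x * pder d f x / f x) θ =
      pder b (fun x => pder c f x) θ * pder d f θ / f θ
      + pder b (fun x => pder d f x) θ * pder c f θ / f θ
      - pder b f θ * pder c f θ * pder d f θ / f θ ^ 2)
  ∧ (f θ * pder c (fun x => pder d (fun x' => Real.log (f x')) x) θ *
        pder b (fun x => Real.log (f x)) θ =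
      pder c (fun x => pder d f x) θ * pder b f θ / f θ
      - pder b f θ * pder c f θ * pder d f θ / f θ ^ 2) := by
  have hne : ∀ x ∈ U, f x ≠ 0 := fun x hx => (hpos x hx).ne'
  have hf1 : ContDiffOn ℝ 1 f U := hf.of_le (by norm_num)
  have hdf : ∀ x ∈ U, DifferentiableAt ℝ f x := fun x hx => contDiffOn_diffAt hU hf1 hx
  have hq2 : ∀ a : Fin n, ContDiffOn ℝ 2 (fun x => pder a f x) U :=
    fun a => contDiffOn_pder3 hU hf
  have hdq : ∀ a : Fin n, ∀ x ∈ U, DifferentiableAt ℝ (fun x' => pder a f x') x :=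
    fun a x hx => contDiffOn_diffAt hU ((hq2 a).of_le (by norm_num)) hx
  have hr1 : ContDiffOn ℝ 1 (fun x => pder c (fun x' => pder d f x') x) U :=
    contDiffOn_pder2 hU (hq2 d)
  have hdr : ∀ x ∈ U, DifferentiableAt ℝ (fun x' => pder c (fun x'' => pder d f x'') x') x :=
    fun x hx => contDiffOn_diffAt hU hr1 hx
  -- first log derivative
  have L1 : ∀ a : Fin n, ∀ x ∈ U, pder a (fun x' => Real.log (f x')) x = pder a f x / f x :=
    fun a x hx => pder_log (hdf x hx) (hne x hx)
  -- second log derivative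
  have L2 : ∀ x ∈ U, pder c (fun x' => pder d (fun x'' => Real.log (f x'')) x') x =
      (pder c (fun x' => pder d f x') x * f x - pder d f x * pder c f x) / f x ^ 2 := by
    intro x hx
    have ev : (fun x' => pder d (fun x'' => Real.log (f x'')) x') =ᶠ[nhds x]
        (fun x' => pder d f x' / f x') :=
      eventually_of_mem (hU.mem_nhds hx) fun z hz => L1 d z hz
    rw [pder_congr_nhds ev, pder_div (hdq d x hx) (hdf x hx) (hne x hx)]
  -- E3
  have E3 : f θ * pder c (fun x => pder d (fun x' => Real.log (f x')) x) θ *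
        pder b (fun x => Real.log (f x)) θ =
      pder c (fun x => pder d f x) θ * pder b f θ / f θ
      - pder b f θ * pder c f θ * pder d f θ / f θ ^ 2 := by
    rw [L2 θ hθ, L1 b θ hθ]
    field_simp [hne θ hθ]
  -- E2
  have E2 : pder b (fun x => pder c f x * pder d f x / f x) θ =
      pder b (fun x => pder c f x) θ * pder d f θ / f θ
      + pder b (fun x => pder d f x) θ * pder c f θ / f θ
      - pder b f θ * pder c f θ * pder d f θ / f θ ^ 2 := by
    rw [pder_div ((hdq c θ hθ).fun_mul (hdq d θ hθ)) (hdf θ hθ) (hne θ hθ),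
      pder_mul (hdq c θ hθ) (hdq d θ hθ)]
    field_simp [hne θ hθ]; ring
  -- E1
  have E1 : f θ * pder b (fun x => pder c (fun x' => pder d (fun x'' => Real.log (f x'')) x') x) θ =
      pder b (fun x => pder c (fun x' => pder d f x') x) θ
      - pder b (fun x => pder c f x) θ * pder d f θ / f θ
      - pder b (fun x => pder d f x) θ * pder c f θ / f θ
      - pder c (fun x => pder d f x) θ * pder b f θ / f θ
      + 2 * (pder b f θ * pder c f θ * pder d f θ / f θ ^ 2) := by
    have ev2 : (fun x => pder c (fun x' => pder d (fun x'' => Real.log (f x'')) x') x)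
        =ᶠ[nhds θ] (fun x =>
          (pder c (fun x' => pder d f x') x * f x - pder d f x * pder c f x) / f x ^ 2) :=
      eventually_of_mem (hU.mem_nhds hθ) fun z hz => L2 z hz
    rw [pder_congr_nhds ev2]
    have hsq : (fun x => f x ^ 2) = fun x => f x * f x := by funext x; ring
    have hN : DifferentiableAt ℝ
        (fun x => pder c (fun x' => pder d f x') x * f x - pder d f x * pder c f x) θ :=
      ((hdr θ hθ).mul (hdf θ hθ)).sub ((hdq d θ hθ).mul (hdq c θ hθ))
    have hD : DifferentiableAt ℝ (fun x => f x ^ 2) θ := by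
      rw [hsq]; exact (hdf θ hθ).mul (hdf θ hθ)
    have hD0 : f θ ^ 2 ≠ 0 := pow_ne_zero 2 (hne θ hθ)
    rw [pder_div hN hD hD0,
      pder_sub ((hdr θ hθ).fun_mul (hdf θ hθ)) ((hdq d θ hθ).fun_mul (hdq c θ hθ)),
      pder_mul (hdr θ hθ) (hdf θ hθ), pder_mul (hdq d θ hθ) (hdq c θ hθ)]
    have hDp : pder b (fun x => f x ^ 2) θ = f θ * pder b f θ + f θ * pder b f θ := by
      rw [hsq]; exact pder_mul (hdf θ hθ) (hdf θ hθ)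
    rw [hDp]
    field_simp [hne θ hθ]; ring
  exact ⟨E1, E2, E3⟩

end Helpers

/-- The Bartlett identity
`∫ p ∂_b∂_c∂_d log p dμ = −∂_b g_{cd} − Γ^{(e)}_{cdb}`. -/
theorem stmt_3 {n : ℕ} {Y : Type*} [MeasurableSpace Y] (μ : Measure Y)
    (Θ : Set (Fin n → ℝ)) (hΘ_open : IsOpen Θ)
    (p : (Fin n → ℝ) → Y → ℝ)
    (hp_pos : ∀ θ' ∈ Θ, ∀ y, 0 < p θ' y)
    (θ : Fin n → ℝ) (hθ : θ ∈ Θ) (b c d : Fin n)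
    (h_diff : ∀ᵐ y ∂μ, ContDiffAt ℝ 3 (fun θ' => p θ' y) θ)
    -- (i) the third Bartlett identity for `p`:
    (h_third_int : Integrable (fun y =>
      pder b (fun θ' => pder c (fun θ'' => pder d (fun θ''' => p θ''' y) θ'') θ') θ) μ)
    (h_third_zero : ∫ y,
      pder b (fun θ' => pder c (fun θ'' => pder d (fun θ''' => p θ''' y) θ'') θ') θ ∂μ = 0)
    -- (ii) differentiation under the integral sign for `g_{cd}`:
    (h_g_diff : DifferentiableAt ℝ (fun θ' => fisherComp μ p c d θ') θ)
    (h_under_int : pder b (fun θ' => fisherComp μ p c d θ') θ =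
      ∫ y, pder b (fun θ' =>
        pder c (fun θ'' => p θ'' y) θ' * pder d (fun θ'' => p θ'' y) θ' / p θ' y) θ ∂μ)
    -- (iii) integrability of the relevant integrands:
    (h_int_m : ∀ i j k : Fin n, i ∈ ({b, c, d} : Set (Fin n)) →
      j ∈ ({b, c, d} : Set (Fin n)) → k ∈ ({b, c, d} : Set (Fin n)) →
      Integrable (fun y => mConnIntegrand p i j k θ y) μ)
    (h_int_T : Integrable (fun y =>
      pder b (fun θ' => p θ' y) θ * pder c (fun θ' => p θ' y) θ *
        pder d (fun θ' => p θ' y) θ / (p θ y) ^ 2) μ)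
    (h_int_e : Integrable (fun y =>
      p θ y * pder c (fun θ' => pder d (fun θ'' => Real.log (p θ'' y)) θ') θ *
        pder b (fun θ' => Real.log (p θ' y)) θ) μ)
    (h_int_log3 : Integrable (fun y =>
      p θ y * pder b (fun θ' =>
        pder c (fun θ'' => pder d (fun θ''' => Real.log (p θ''' y)) θ'') θ') θ) μ) :
    ∫ y, p θ y * pder b (fun θ' =>
        pder c (fun θ'' => pder d (fun θ''' => Real.log (p θ''' y)) θ'') θ') θ ∂μ =
      -pder b (fun θ' => fisherComp μ p c d θ') θ - eConn μ p c d b θ := by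
  -- pointwise identities a.e.
  have hae : ∀ᵐ y ∂μ,
      (p θ y * pder b (fun θ' =>
          pder c (fun θ'' => pder d (fun θ''' => Real.log (p θ''' y)) θ'') θ') θ =
        pder b (fun θ' => pder c (fun θ'' => pder d (fun θ''' => p θ''' y) θ'') θ') θ
        - mConnIntegrand p b c d θ y - mConnIntegrand p b d c θ y - mConnIntegrand p c d b θ y
        + 2 * (pder b (fun θ' => p θ' y) θ * pder c (fun θ' => p θ' y) θ *
            pder d (fun θ' => p θ' y) θ / (p θ y) ^ 2))
    ∧ (pder b (fun θ' =>
          pder c (fun θ'' => p θ'' y) θ' * pder d (fun θ'' => p θ'' y) θ' / p θ' y) θ =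
        mConnIntegrand p b c d θ y + mConnIntegrand p b d c θ y
        - pder b (fun θ' => p θ' y) θ * pder c (fun θ' => p θ' y) θ *
            pder d (fun θ' => p θ' y) θ / (p θ y) ^ 2)
    ∧ (p θ y * pder c (fun θ' => pder d (fun θ'' => Real.log (p θ'' y)) θ') θ *
          pder b (fun θ' => Real.log (p θ' y)) θ =
        mConnIntegrand p c d b θ y
        - pder b (fun θ' => p θ' y) θ * pder c (fun θ' => p θ' y) θ *
            pder d (fun θ' => p θ' y) θ / (p θ y) ^ 2) := by
    filter_upwards [h_diff] with y hy
    obtain ⟨u, hu, hcd⟩ := hy.contDiffOn le_rfl (by simp)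
    obtain ⟨V, hVu, hVopen, hθV⟩ := mem_nhds_iff.mp (Filter.inter_mem hu (hΘ_open.mem_nhds hθ))
    have key := bartlett_key hVopen hθV
      (hcd.mono (hVu.trans Set.inter_subset_left))
      (fun x hx => hp_pos x (hVu hx).2 y) b c d
    simpa only [mConnIntegrand] using key
  -- integrability abbreviations
  have hm1 : Integrable (fun y => mConnIntegrand p b c d θ y) μ :=
    h_int_m b c d (by simp) (by simp) (by simp)
  have hm2 : Integrable (fun y => mConnIntegrand p b d c θ y) μ :=
    h_int_m b d c (by simp) (by simp) (by simp)
  have hm3 : Integrable (fun y => mConnIntegrand p c d b θ y) μ :=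
    h_int_m c d b (by simp) (by simp) (by simp)
  set Tf := fun y => pder b (fun θ' => p θ' y) θ * pder c (fun θ' => p θ' y) θ *
      pder d (fun θ' => p θ' y) θ / (p θ y) ^ 2 with hTf
  -- LHS
  have i1 : Integrable (fun y =>
      pder b (fun θ' => pder c (fun θ'' => pder d (fun θ''' => p θ''' y) θ'') θ') θ
        - mConnIntegrand p b c d θ y) μ := h_third_int.sub hm1
  have i2 : Integrable (fun y =>
      pder b (fun θ' => pder c (fun θ'' => pder d (fun θ''' => p θ''' y) θ'') θ') θ
        - mConnIntegrand p b c d θ y - mConnIntegrand p b d c θ y) μ := i1.sub hm2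
  have i3 : Integrable (fun y =>
      pder b (fun θ' => pder c (fun θ'' => pder d (fun θ''' => p θ''' y) θ'') θ') θ
        - mConnIntegrand p b c d θ y - mConnIntegrand p b d c θ y
        - mConnIntegrand p c d b θ y) μ := i2.sub hm3
  have i4 : Integrable (fun y => 2 * Tf y) μ := h_int_T.const_mul 2
  have hLHS : ∫ y, p θ y * pder b (fun θ' =>
        pder c (fun θ'' => pder d (fun θ''' => Real.log (p θ''' y)) θ'') θ') θ ∂μ =
      0 - ∫ y, mConnIntegrand p b c d θ y ∂μ - ∫ y, mConnIntegrand p b d c θ y ∂μ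
        - ∫ y, mConnIntegrand p c d b θ y ∂μ + 2 * ∫ y, Tf y ∂μ := by
    rw [integral_congr_ae (hae.mono fun y hy => hy.1)]
    rw [integral_add i3 i4, integral_sub i2 hm3, integral_sub i1 hm2,
      integral_sub h_third_int hm1, h_third_zero, integral_const_mul]
  -- g derivative
  have hG : pder b (fun θ' => fisherComp μ p c d θ') θ =
      (∫ y, mConnIntegrand p b c d θ y ∂μ) + (∫ y, mConnIntegrand p b d c θ y ∂μ)
        - ∫ y, Tf y ∂μ := by
    have j1 : Integrable (fun y => mConnIntegrand p b c d θ y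
        + mConnIntegrand p b d c θ y) μ := hm1.add hm2
    rw [h_under_int, integral_congr_ae (hae.mono fun y hy => hy.2.1),
      integral_sub j1 h_int_T, integral_add hm1 hm2]
  -- eConn
  have hE : eConn μ p c d b θ =
      (∫ y, mConnIntegrand p c d b θ y ∂μ) - ∫ y, Tf y ∂μ := by
    rw [eConn, integral_congr_ae (hae.mono fun y hy => hy.2.2), integral_sub hm3 h_int_T]
  rw [hLHS, hG, hE]; ring
end

section
/- Let n ∈ ℕ, y_1, …, y_n ∈ ℝ, a > 0, b > 0, S = Σ_{i=1}^n y_i^2, and let L(θ) = Π_{i=1}^n (θ/(2π))^{1/2} exp(−θ y_i^2/2) be the Gaussian likelihood with precision θ. Let π_PM(θ) = θ^{a−1} e^{−bθ} and π_MAP(θ) = θ^a e^{−bθ} on (0, ∞). Then the posterior mean based on π_PM, namely (∫_0^∞ θ π_PM(θ) L(θ) dθ)/(∫_0^∞ π_PM(θ) L(θ) dθ), equals the unique maximizer over (0,∞) of θ ↦ log L(θ) + log π_MAP(θ); both equal (a + n/2)/(b + S/2). That is, the pair (π_PM, π_MAP) is an exactly matching prior pair for this model. -/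
open MeasureTheory

/-- Exact matching prior pair for the zero-mean Gaussian model with precision `θ`:
the posterior mean based on `π_PM(θ) = θ^{a−1} e^{−bθ}` equals the unique maximizer of
`log L + log π_MAP` with `π_MAP(θ) = θ^a e^{−bθ}`; both equal `(a + n/2)/(b + S/2)`. -/
theorem stmt_11 (n : ℕ) (y : Fin n → ℝ) (a b : ℝ) (ha : 0 < a) (hb : 0 < b)
    (S : ℝ) (hS : S = ∑ i, (y i) ^ 2)
    (L πPM πMAP : ℝ → ℝ)
    (hL : ∀ θ : ℝ, L θ = ∏ i, Real.sqrt (θ / (2 * Real.pi)) * Real.exp (-θ * (y i) ^ 2 / 2))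
    (hPM : ∀ θ : ℝ, πPM θ = θ ^ (a - 1) * Real.exp (-b * θ))
    (hMAP : ∀ θ : ℝ, πMAP θ = θ ^ a * Real.exp (-b * θ)) :
    -- the posterior mean based on π_PM:
    (∫ θ in Set.Ioi (0 : ℝ), θ * πPM θ * L θ) / (∫ θ in Set.Ioi (0 : ℝ), πPM θ * L θ) =
      (a + n / 2) / (b + S / 2) ∧
    -- ... equals the unique maximizer over (0, ∞) of the log posterior based on π_MAP:
    (a + n / 2) / (b + S / 2) ∈ Set.Ioi (0 : ℝ) ∧
    ∀ θ ∈ Set.Ioi (0 : ℝ), θ ≠ (a + n / 2) / (b + S / 2) →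
      Real.log (L θ) + Real.log (πMAP θ) <
        Real.log (L ((a + n / 2) / (b + S / 2))) +
          Real.log (πMAP ((a + n / 2) / (b + S / 2))) := by
  have hS0 : 0 ≤ S := by
    rw [hS]; exact Finset.sum_nonneg fun i _ => sq_nonneg _
  set c : ℝ := a + n / 2 with hc
  set d : ℝ := b + S / 2 with hd
  have hc0 : 0 < c := by positivity
  have hd0 : 0 < d := by positivity
  have hπ : (0:ℝ) < 2 * Real.pi := by positivity
  -- closed form for L on positives
  have hLform : ∀ θ : ℝ, 0 < θ →
      L θ = (θ / (2 * Real.pi)) ^ ((n:ℝ) / 2) * Real.exp (-(θ * S) / 2) := by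
    intro θ hθ
    have hq : (0:ℝ) ≤ θ / (2 * Real.pi) := by positivity
    rw [hL, Finset.prod_mul_distrib, Finset.prod_const, ← Real.exp_sum]
    congr 1
    · rw [Real.sqrt_eq_rpow, ← Real.rpow_natCast (_ ^ (1/2 : ℝ)), ← Real.rpow_mul hq,
        Finset.card_univ, Fintype.card_fin]
      ring_nf
    · congr 1
      rw [← Finset.sum_div, ← Finset.mul_sum, ← hS]
      ring
  have hLpos : ∀ θ : ℝ, 0 < θ → 0 < L θ := by
    intro θ hθ
    rw [hLform θ hθ]
    positivity
  -- product formulas on Ioi 0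
  have key : ∀ θ ∈ Set.Ioi (0:ℝ),
      πPM θ * L θ = (2 * Real.pi) ^ (-((n:ℝ) / 2)) * (θ ^ (c - 1) * Real.exp (-(d * θ))) := by
    intro θ hθ
    have hθ : (0:ℝ) < θ := hθ
    rw [hPM, hLform θ hθ, Real.div_rpow hθ.le hπ.le, Real.rpow_neg hπ.le]
    rw [show c - 1 = (a - 1) + (n:ℝ)/2 by rw [hc]; ring, Real.rpow_add hθ]
    rw [show -(d * θ) = -b * θ + -(θ * S) / 2 by rw [hd]; ring, Real.exp_add, div_eq_mul_inv]
    ring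
  have key2 : ∀ θ ∈ Set.Ioi (0:ℝ),
      θ * πPM θ * L θ = (2 * Real.pi) ^ (-((n:ℝ) / 2)) * (θ ^ (c + 1 - 1) * Real.exp (-(d * θ))) := by
    intro θ hθ
    have hθ : (0:ℝ) < θ := hθ
    have := key θ hθ
    have hpow : θ ^ (c + 1 - 1) = θ * θ ^ (c - 1) := by
      rw [show c + 1 - 1 = 1 + (c - 1) by ring, Real.rpow_add hθ, Real.rpow_one]
    rw [hpow, mul_assoc θ (πPM θ) (L θ), this]
    ring
  have I1 : (∫ θ in Set.Ioi (0:ℝ), πPM θ * L θ)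
      = (2 * Real.pi) ^ (-((n:ℝ) / 2)) * ((1 / d) ^ c * Real.Gamma c) := by
    rw [setIntegral_congr_fun measurableSet_Ioi key, integral_const_mul,
      Real.integral_rpow_mul_exp_neg_mul_Ioi hc0 hd0]
  have I2 : (∫ θ in Set.Ioi (0:ℝ), θ * πPM θ * L θ)
      = (2 * Real.pi) ^ (-((n:ℝ) / 2)) * ((1 / d) ^ (c + 1) * Real.Gamma (c + 1)) := by
    rw [setIntegral_congr_fun measurableSet_Ioi key2, integral_const_mul,
      Real.integral_rpow_mul_exp_neg_mul_Ioi (by linarith) hd0]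
  have hKpos : (0:ℝ) < (2 * Real.pi) ^ (-((n:ℝ) / 2)) := by positivity
  have hΓpos : 0 < Real.Gamma c := Real.Gamma_pos_of_pos hc0
  have hratio : (∫ θ in Set.Ioi (0:ℝ), θ * πPM θ * L θ) / (∫ θ in Set.Ioi (0:ℝ), πPM θ * L θ)
      = c / d := by
    rw [I1, I2, Real.Gamma_add_one hc0.ne', Real.rpow_add (by positivity : (0:ℝ) < 1/d),
      Real.rpow_one]
    field_simp
  refine ⟨hratio, by exact div_pos hc0 hd0, ?_⟩
  -- log posterior formula
  have glog : ∀ θ : ℝ, 0 < θ →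
      Real.log (L θ) + Real.log (πMAP θ)
        = c * Real.log θ - d * θ - ((n:ℝ) / 2) * Real.log (2 * Real.pi) := by
    intro θ hθ
    rw [hLform θ hθ, hMAP, Real.log_mul (by positivity) (Real.exp_pos _).ne',
      Real.log_mul (by positivity) (Real.exp_pos _).ne', Real.log_rpow hθ,
      Real.log_rpow (by positivity), Real.log_exp, Real.log_exp,
      Real.log_div hθ.ne' hπ.ne', hc, hd]
    ring
  intro θ hθ hne
  have hθ0 : (0:ℝ) < θ := hθ
  have hθs : (0:ℝ) < c / d := div_pos hc0 hd0
  rw [glog θ hθ0, glog _ hθs]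
  have h1 : Real.log (θ / (c / d)) < θ / (c / d) - 1 :=
    Real.log_lt_sub_one_of_pos (by positivity) (by
      intro h
      exact hne ((div_eq_one_iff_eq hθs.ne').mp h))
  rw [Real.log_div hθ0.ne' hθs.ne'] at h1
  have h2 : c * (Real.log θ - Real.log (c / d)) < c * (θ / (c / d) - 1) :=
    mul_lt_mul_of_pos_left h1 hc0
  have h3 : c * (θ / (c / d)) = d * θ := by field_simp
  have h4 : d * (c / d) = c := by field_simp
  nlinarith [h2, h3, h4]
end

section
/- Let n ∈ ℕ with n ≥ 1, a > 0, b > 0, and S_y ≥ 0. The function f : (0, ∞) → ℝ defined by f(λ) = (a + S_y) log λ − (b + n) λ attains a strict global maximum at λ* = (a + S_y)/(b + n), and λ* is its unique maximizer on (0, ∞). Consequently, in the Poisson model with data y_1, …, y_n ∈ ℕ and S_y = Σ y_i, the posterior mean based on the Gamma(a, b) prior π_PM(λ) ∝ λ^{a−1} e^{−bλ} coincides exactly with the MAP estimate based on the prior π_MAP(λ) = λ π_PM(λ) ∝ λ^a e^{−bλ}: both equal (a + S_y)/(b + n). -/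
open MeasureTheory

/-- The function `f(λ) = (a + S_y) log λ − (b + n) λ` attains a strict global maximum on
`(0,∞)` at `λ* = (a + S_y)/(b + n)`, its unique maximizer. Consequently, in the Poisson
model the posterior mean based on the `Gamma(a,b)` prior `π_PM(λ) = λ^{a−1}e^{−bλ}`
coincides exactly with the MAP estimate based on `π_MAP(λ) = λ π_PM(λ)`:
both equal `(a + S_y)/(b + n)`. -/
theorem stmt_13 (n : ℕ) (hn : 1 ≤ n) (y : Fin n → ℕ) (a b : ℝ) (ha : 0 < a) (hb : 0 < b)
    (Sy : ℝ) (hSy : Sy = ∑ i, (y i : ℝ))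
    (f L πPM πMAP : ℝ → ℝ)
    (hf : ∀ lam : ℝ, f lam = (a + Sy) * Real.log lam - (b + n) * lam)
    (hL : ∀ lam : ℝ, L lam = ∏ i, lam ^ (y i) * Real.exp (-lam) / (Nat.factorial (y i)))
    (hPM : ∀ lam : ℝ, πPM lam = lam ^ (a - 1) * Real.exp (-b * lam))
    (hMAP : ∀ lam : ℝ, πMAP lam = lam ^ a * Real.exp (-b * lam)) :
    -- λ* is positive and is the unique strict global maximizer of f on (0, ∞):
    (a + Sy) / (b + n) ∈ Set.Ioi (0 : ℝ) ∧
    (∀ lam ∈ Set.Ioi (0 : ℝ), lam ≠ (a + Sy) / (b + n) →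
      f lam < f ((a + Sy) / (b + n))) ∧
    -- the posterior mean based on π_PM equals λ*:
    (∫ lam in Set.Ioi (0 : ℝ), lam * πPM lam * L lam) /
        (∫ lam in Set.Ioi (0 : ℝ), πPM lam * L lam) = (a + Sy) / (b + n) ∧
    -- and λ* is the unique maximizer of the log posterior based on π_MAP:
    ∀ lam ∈ Set.Ioi (0 : ℝ), lam ≠ (a + Sy) / (b + n) →
      Real.log (L lam) + Real.log (πMAP lam) <
        Real.log (L ((a + Sy) / (b + n))) + Real.log (πMAP ((a + Sy) / (b + n))) := by
  have hSy0 : 0 ≤ Sy := by rw [hSy]; positivity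
  have hc : 0 < a + Sy := by linarith
  have hd : 0 < b + (n : ℝ) := by positivity
  set c := a + Sy with hcdef
  set d := b + (n : ℝ) with hddef
  set lamS := c / d with hlS
  have hlSpos : 0 < lamS := div_pos hc hd
  set C : ℝ := ∏ i, (Nat.factorial (y i) : ℝ) with hC
  have hCpos : 0 < C := Finset.prod_pos (fun i _ => by positivity)
  -- formula for L on positive reals, with rpow
  have hL' : ∀ lam : ℝ, 0 < lam → L lam = lam ^ Sy * Real.exp (-(n : ℝ) * lam) / C := by
    intro lam hlam
    rw [hL, Finset.prod_div_distrib, Finset.prod_mul_distrib, Finset.prod_const,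
      Finset.prod_pow_eq_pow_sum, Finset.card_univ, Fintype.card_fin, ← Real.exp_nat_mul]
    have h1 : (lam : ℝ) ^ (∑ i, y i) = lam ^ Sy := by
      rw [← Real.rpow_natCast lam (∑ i, y i)]
      congr 1
      rw [hSy]; push_cast; rfl
    rw [h1, hC]
    ring_nf
  -- strict maximality of f
  have hmax : ∀ lam : ℝ, 0 < lam → lam ≠ lamS → f lam < f lamS := by
    intro lam hlam hne
    rw [hf, hf]
    have hx : lam / lamS ≠ 1 := by
      intro h
      apply hne
      field_simp at h
      linarith
    have key := Real.log_lt_sub_one_of_pos (div_pos hlam hlSpos) hx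
    rw [Real.log_div (ne_of_gt hlam) (ne_of_gt hlSpos)] at key
    have h2 : lam / lamS = d * lam / c := by
      rw [hlS]; field_simp
    have h3 : d * lamS = c := by
      rw [hlS]; field_simp
    rw [h2] at key
    have key2 := mul_lt_mul_of_pos_left key hc
    have h4 : c * (d * lam / c - 1) = d * lam - c := by field_simp
    rw [h4] at key2
    -- key2 : c * (log lam - log lamS) < d * lam - c
    nlinarith [key2, h3]
  -- pointwise form of the integrands
  have hint1 : Set.EqOn (fun t => πPM t * L t)
      (fun t => C⁻¹ * (t ^ (c - 1) * Real.exp (-(d * t)))) (Set.Ioi (0 : ℝ)) := by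
    intro t ht
    have ht : (0 : ℝ) < t := ht
    simp only
    rw [hPM, hL' t ht]
    have h1 : t ^ (a - 1) * t ^ Sy = t ^ (c - 1) := by
      rw [← Real.rpow_add ht, hcdef]; ring_nf
    have h2 : Real.exp (-b * t) * Real.exp (-(n : ℝ) * t) = Real.exp (-(d * t)) := by
      rw [← Real.exp_add, hddef]; ring_nf
    rw [div_eq_mul_inv, ← h1, ← h2]
    ring
  have hint2 : Set.EqOn (fun t => t * πPM t * L t)
      (fun t => C⁻¹ * (t ^ (c + 1 - 1) * Real.exp (-(d * t)))) (Set.Ioi (0 : ℝ)) := by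
    intro t ht
    have ht : (0 : ℝ) < t := ht
    simp only
    rw [hPM, hL' t ht]
    have h1 : t * t ^ (a - 1) * t ^ Sy = t ^ (c + 1 - 1) := by
      rw [show c + 1 - 1 = 1 + (a - 1) + Sy by ring, Real.rpow_add ht, Real.rpow_add ht,
        Real.rpow_one]
    have h2 : Real.exp (-b * t) * Real.exp (-(n : ℝ) * t) = Real.exp (-(d * t)) := by
      rw [← Real.exp_add, hddef]; ring_nf
    rw [div_eq_mul_inv, ← h1, ← h2]
    ring
  have I1 : (∫ t in Set.Ioi (0 : ℝ), πPM t * L t)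
      = C⁻¹ * ((1 / d) ^ c * Real.Gamma c) := by
    rw [setIntegral_congr_fun measurableSet_Ioi hint1, integral_const_mul,
      Real.integral_rpow_mul_exp_neg_mul_Ioi hc hd]
  have I2 : (∫ t in Set.Ioi (0 : ℝ), t * πPM t * L t)
      = C⁻¹ * ((1 / d) ^ (c + 1) * Real.Gamma (c + 1)) := by
    rw [setIntegral_congr_fun measurableSet_Ioi hint2, integral_const_mul,
      Real.integral_rpow_mul_exp_neg_mul_Ioi (by linarith) hd]
  have hGpos : 0 < Real.Gamma c := Real.Gamma_pos_of_pos hc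
  have hratio : (∫ t in Set.Ioi (0 : ℝ), t * πPM t * L t)
      / (∫ t in Set.Ioi (0 : ℝ), πPM t * L t) = lamS := by
    rw [I1, I2, Real.Gamma_add_one (ne_of_gt hc),
      show (1 / d : ℝ) ^ (c + 1) = (1 / d) ^ c * (1 / d) by
        rw [Real.rpow_add (by positivity : (0:ℝ) < 1 / d) c 1, Real.rpow_one]]
    have hpow : (0 : ℝ) < (1 / d) ^ c := Real.rpow_pos_of_pos (by positivity) c
    rw [hlS]
    field_simp
  -- log posterior identity
  have hlogId : ∀ lam : ℝ, 0 < lam →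
      Real.log (L lam) + Real.log (πMAP lam) = f lam - Real.log C := by
    intro lam hlam
    rw [hL' lam hlam, hMAP, hf,
      Real.log_div (by positivity) (ne_of_gt hCpos),
      Real.log_mul (by positivity) (Real.exp_ne_zero _),
      Real.log_mul (by positivity) (Real.exp_ne_zero _),
      Real.log_rpow hlam, Real.log_rpow hlam, Real.log_exp, Real.log_exp]
    ring
  refine ⟨hlSpos, fun lam hlam hne => hmax lam hlam hne, hratio, ?_⟩
  intro lam hlam hne
  rw [hlogId lam hlam, hlogId lamS hlSpos]
  have := hmax lam hlam hne
  linarith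
end
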